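/- For every nonnegative integer n, ∑_{k=0}^{n} (1/(k+1))·H_{n-k} = H_{n+1}² − H_{n+1}^{(2)}. -/
import Mathlib


open Finset

/-- The harmonic number `H n = ∑_{k=1}^n 1/k`. -/
def H (n : ℕ) : ℚ := ∑ k ∈ Finset.range n, (1 : ℚ) / ((k : ℚ) + 1)

/-- The generalized harmonic number `H n ^ (m) = ∑_{k=1}^n 1/k^m`. -/
def Hgen (m n : ℕ) : ℚ := ∑ k ∈ Finset.range n, (1 : ℚ) / ((k : ℚ) + 1) ^ m

lemma H_succ (n : ℕ) : H (n + 1) = H n + 1 / ((n : ℚ) + 1) := by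
  simp [H, Finset.sum_range_succ]

lemma Hgen_succ (m n : ℕ) : Hgen m (n + 1) = Hgen m n + 1 / ((n : ℚ) + 1) ^ m := by
  simp [Hgen, Finset.sum_range_succ]

lemma reflect (n : ℕ) :
    ∑ k ∈ Finset.range (n + 1), (1 : ℚ) / (((n - k : ℕ) : ℚ) + 1) = H (n + 1) := by
  rw [H]
  rw [← Finset.sum_range_reflect (fun k => (1 : ℚ) / ((k : ℚ) + 1)) (n + 1)]
  apply Finset.sum_congr rfl
  intro k hk
  simp

lemma key (n : ℕ) :
    ∑ k ∈ Finset.range (n + 1),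
      (1 : ℚ) / ((k : ℚ) + 1) * (1 / (((n - k : ℕ) : ℚ) + 1)) =
      2 * H (n + 1) / ((n : ℚ) + 2) := by
  have h1 : ∑ k ∈ Finset.range (n + 1),
      (1 : ℚ) / ((k : ℚ) + 1) * (1 / (((n - k : ℕ) : ℚ) + 1)) =
      ∑ k ∈ Finset.range (n + 1),
      (1 / ((n : ℚ) + 2)) * (1 / ((k : ℚ) + 1) + 1 / (((n - k : ℕ) : ℚ) + 1)) := by
    apply Finset.sum_congr rfl
    intro k hk
    have hk' : k ≤ n := Nat.lt_succ_iff.mp (Finset.mem_range.mp hk)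
    have hcast : ((n - k : ℕ) : ℚ) = (n : ℚ) - k := by
      push_cast [Nat.cast_sub hk']; ring
    rw [hcast]
    have hk0 : (k : ℚ) + 1 ≠ 0 := by positivity
    have hnk0 : (n : ℚ) - k + 1 ≠ 0 := by
      have : (k : ℚ) ≤ n := by exact_mod_cast hk'
      nlinarith
    have hn2 : (n : ℚ) + 2 ≠ 0 := by positivity
    field_simp
    ring
  rw [h1, ← Finset.mul_sum, Finset.sum_add_distrib, reflect]
  have : ∑ k ∈ Finset.range (n + 1), (1 : ℚ) / ((k : ℚ) + 1) = H (n + 1) := rfl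
  rw [this]
  ring

theorem stmt3 (n : ℕ) :
    ∑ k ∈ Finset.range (n + 1), (1 : ℚ) / ((k : ℚ) + 1) * H (n - k) =
      (H (n + 1)) ^ 2 - Hgen 2 (n + 1) := by
  induction n with
  | zero => simp [H, Hgen]
  | succ n ih =>
    rw [Finset.sum_range_succ]
    have hzero : (n + 1 - (n + 1) : ℕ) = 0 := by omega
    rw [hzero]
    have hH0 : H 0 = 0 := by simp [H]
    rw [hH0, mul_zero, add_zero]
    have step : ∀ k ∈ Finset.range (n + 1),
        (1 : ℚ) / ((k : ℚ) + 1) * H (n + 1 - k) =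
        (1 : ℚ) / ((k : ℚ) + 1) * H (n - k) +
        (1 : ℚ) / ((k : ℚ) + 1) * (1 / (((n - k : ℕ) : ℚ) + 1)) := by
      intro k hk
      have hk' : k ≤ n := Nat.lt_succ_iff.mp (Finset.mem_range.mp hk)
      have : n + 1 - k = (n - k) + 1 := by omega
      rw [this, H_succ]
      ring
    rw [Finset.sum_congr rfl step, Finset.sum_add_distrib, ih, key]
    rw [H_succ (n + 1), Hgen_succ 2 (n + 1)]
    have hn2 : ((n : ℚ) + 1) + 1 ≠ 0 := by positivity
    push_cast
    field_simp
    ring
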